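/- If Δ is a simplicial complex on n vertices that is not the boundary of a simplex, then Δ is the Scarf complex of the ideal J'_Δ = (m'_1,…,m'_n). -/

import Mathlib

noncomputable section
attribute [local instance] Classical.propDecidable

/-- The simplicial complex generated by a set of faces: all nonempty subsets. -/
def gen {V : Type} (S : Finset (Finset V)) : Finset (Finset V) :=
  S.biUnion fun F => F.powerset.filter (· ≠ ∅)

/-- The facets (maximal faces) of a complex given by its finite set of faces. -/
def facets {V : Type} (Δ : Finset (Finset V)) : Finset (Finset V) :=
  Δ.filter fun F => ∀ G ∈ Δ, F ⊆ G → F = G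

/-- A (finite, abstract) simplicial complex: nonempty faces, closed under nonempty subsets. -/
def IsComplex {V : Type} (Δ : Finset (Finset V)) : Prop :=
  ∅ ∉ Δ ∧ ∀ F ∈ Δ, ∀ G, G ⊆ F → G ≠ ∅ → G ∈ Δ

/-- `F` is a leaf of `Δ`: `F` is a facet which is either the only facet, or
there is another facet `G` (a joint) with `F ∩ (Δ ∖ F) ⊆ G`, i.e. the
intersection of `F` with any other facet is contained in `G`. -/
def IsLeaf {V : Type} (Δ : Finset (Finset V)) (F : Finset V) : Prop :=
  F ∈ facets Δ ∧ (facets Δ = {F} ∨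
    ∃ G ∈ facets Δ, G ≠ F ∧ ∀ H ∈ facets Δ, H ≠ F → F ∩ H ⊆ G)

def HasLeaf {V : Type} (Δ : Finset (Finset V)) : Prop := ∃ F, IsLeaf Δ F

/-- A forest: every nonempty subcollection (complex generated by a subset of the
facets) has a leaf. -/
def IsForest {V : Type} (Δ : Finset (Finset V)) : Prop :=
  ∀ S ⊆ facets Δ, S.Nonempty → HasLeaf (gen S)

/-- Vertex set of a complex. -/
def vtx {V : Type} (Δ : Finset (Finset V)) : Finset V := Δ.sup id

/-- Connectedness: nonempty, and any two vertices are joined by a chain of faces. -/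
def Conn {V : Type} (Δ : Finset (Finset V)) : Prop :=
  Δ.Nonempty ∧ ∀ u ∈ vtx Δ, ∀ v ∈ vtx Δ,
    Relation.ReflTransGen (fun a b => ∃ σ ∈ Δ, a ∈ σ ∧ b ∈ σ) u v

/-- A simplicial tree is a connected forest. -/
def IsTree {V : Type} (Δ : Finset (Finset V)) : Prop := Conn Δ ∧ IsForest Δ

/-! Monomials in the variables `x_σ`, indexed by the nonempty faces `σ` of a complex
`Δ`.  All monomials arising in the Peeva–Velasco construction and its refinement are
squarefree, so we represent a squarefree monomial by its finite set of variables
(a `Finset` of faces); then divisibility is `⊆`, lcm is `∪`, and a product of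
monomials with disjoint supports is `∪`. -/

/-- The Peeva–Velasco generator `m_v = ∏_{σ ∈ Δ, v ∉ σ} x_σ`. -/
def mPV {V : Type} (Δ : Finset (Finset V)) (v : V) : Finset (Finset V) :=
  Δ.filter fun σ => v ∉ σ

/-- `A_Δ(v)`: the facets of `Δ` not containing `v`. -/
def AF {V : Type} (Δ : Finset (Finset V)) (v : V) : Finset (Finset V) :=
  (facets Δ).filter fun F => v ∉ F

/-- `B_Δ(v)`: the facets of `Δ` containing `v`. -/
def BF {V : Type} (Δ : Finset (Finset V)) (v : V) : Finset (Finset V) :=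
  (facets Δ).filter fun F => v ∈ F

/-- The refined generator `m'_v`: the squarefree product of the variables
`x_{G∖{v}}` for facets `G ∋ v`, the variables `x_F` for facets `F ∌ v`, and the
variables `x_σ` for maximal proper (nonempty) faces `σ` of such facets `F`. -/
def mPV' {V : Type} (Δ : Finset (Finset V)) (v : V) : Finset (Finset V) :=
  ((BF Δ v).image (fun G => G.erase v)).filter (· ≠ ∅) ∪ AF Δ v ∪
    (AF Δ v).biUnion fun F => F.powerset.filter fun σ => σ.card + 1 = F.card ∧ σ ≠ ∅

/-- `Δ` is the boundary of the full simplex on its `n` vertices: all proper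
nonempty subsets of the vertex set. -/
def IsBoundaryOfFullSimplex {n : ℕ} (Δ : Finset (Finset (Fin n))) : Prop :=
  Δ = (Finset.univ : Finset (Fin n)).powerset.filter
        fun s => s ≠ ∅ ∧ s ≠ Finset.univ

/-! ### Auxiliary material for the proof -/

/-- The set of facets together with the nonempty codimension-one faces of facets. -/
def Dset {V : Type} (Δ : Finset (Finset V)) : Finset (Finset V) :=
  facets Δ ∪ (facets Δ).biUnion fun F =>
    F.powerset.filter fun σ => σ.card + 1 = F.card ∧ σ ≠ ∅

lemma facets_subset {V : Type} {Δ : Finset (Finset V)} : facets Δ ⊆ Δ :=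
  Finset.filter_subset _ _

lemma mem_Dset {V : Type} {Δ : Finset (Finset V)} {ρ : Finset V} :
    ρ ∈ Dset Δ ↔ ρ ∈ facets Δ ∨
      ∃ F ∈ facets Δ, ρ ⊆ F ∧ ρ.card + 1 = F.card ∧ ρ ≠ ∅ := by
  simp [Dset, Finset.mem_union, Finset.mem_biUnion, Finset.mem_filter,
    Finset.mem_powerset, and_assoc]

/-- Key structural fact: `m'_v` consists exactly of the elements of `Dset Δ`
not containing `v`. -/
lemma mem_mPV' {V : Type} {Δ : Finset (Finset V)} {v : V} {ρ : Finset V} :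
    ρ ∈ mPV' Δ v ↔ ρ ∈ Dset Δ ∧ v ∉ ρ := by
  constructor
  · intro h
    rw [mPV'] at h
    rcases Finset.mem_union.1 h with h | h
    · rcases Finset.mem_union.1 h with h | h
      · rw [Finset.mem_filter, Finset.mem_image] at h
        obtain ⟨⟨G, hG, rfl⟩, hne⟩ := h
        rw [BF, Finset.mem_filter] at hG
        refine ⟨mem_Dset.2 (Or.inr ⟨G, hG.1, Finset.erase_subset _ _,
          Finset.card_erase_add_one hG.2, hne⟩), Finset.notMem_erase _ _⟩
      · rw [AF, Finset.mem_filter] at h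
        exact ⟨mem_Dset.2 (Or.inl h.1), h.2⟩
    · rw [Finset.mem_biUnion] at h
      obtain ⟨F, hF, hρ⟩ := h
      rw [AF, Finset.mem_filter] at hF
      rw [Finset.mem_filter, Finset.mem_powerset] at hρ
      exact ⟨mem_Dset.2 (Or.inr ⟨F, hF.1, hρ.1, hρ.2⟩),
        fun hv => hF.2 (hρ.1 hv)⟩
  · rintro ⟨hD, hv⟩
    rw [mPV']
    rcases mem_Dset.1 hD with h | ⟨F, hF, hsub, hcard, hne⟩
    · exact Finset.mem_union_left _ (Finset.mem_union_right _
        (Finset.mem_filter.2 ⟨h, hv⟩))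
    · by_cases hvF : v ∈ F
      · have hρ : ρ = F.erase v := by
          apply Finset.eq_of_subset_of_card_le
            (Finset.subset_erase.2 ⟨hsub, hv⟩)
          rw [Finset.card_erase_of_mem hvF]
          omega
        refine Finset.mem_union_left _ (Finset.mem_union_left _ ?_)
        rw [Finset.mem_filter, Finset.mem_image]
        exact ⟨⟨F, Finset.mem_filter.2 ⟨hF, hvF⟩, hρ.symm⟩, hne⟩
      · refine Finset.mem_union_right _ (Finset.mem_biUnion.2
          ⟨F, Finset.mem_filter.2 ⟨hF, hvF⟩, ?_⟩)
        exact Finset.mem_filter.2 ⟨Finset.mem_powerset.2 hsub, hcard, hne⟩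

lemma mem_biUnion_mPV {V : Type} {inst : DecidableEq (Finset V)}
    {Δ : Finset (Finset V)} {τ : Finset V} {ρ : Finset V} :
    ρ ∈ @Finset.biUnion _ _ inst τ (mPV Δ) ↔ ρ ∈ Δ ∧ ¬ τ ⊆ ρ := by
  simp only [Finset.mem_biUnion, mPV, Finset.mem_filter, Finset.not_subset]
  tauto

lemma mem_biUnion_mPV' {V : Type} {inst : DecidableEq (Finset V)}
    {Δ : Finset (Finset V)} {τ : Finset V} {ρ : Finset V} :
    ρ ∈ @Finset.biUnion _ _ inst τ (mPV' Δ) ↔ ρ ∈ Dset Δ ∧ ¬ τ ⊆ ρ := by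
  simp only [Finset.mem_biUnion, mem_mPV', Finset.not_subset]
  tauto

lemma biUnion_label_eq_iff {V : Type} {inst : DecidableEq (Finset V)}
    {S : Finset (Finset V)} {m : V → Finset (Finset V)}
    (hm : ∀ τ ρ, ρ ∈ @Finset.biUnion _ _ inst τ m ↔ ρ ∈ S ∧ ¬ τ ⊆ ρ) (τ σ : Finset V) :
    @Finset.biUnion _ _ inst τ m = @Finset.biUnion _ _ inst σ m ↔
      ∀ ρ ∈ S, (τ ⊆ ρ ↔ σ ⊆ ρ) := by
  constructor
  · intro h ρ hρ
    constructor
    · intro hτ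
      by_contra hσ
      have : ρ ∈ τ.biUnion m := by rw [h]; exact (hm σ ρ).2 ⟨hρ, hσ⟩
      exact ((hm τ ρ).1 this).2 hτ
    · intro hσ
      by_contra hτ
      have : ρ ∈ σ.biUnion m := by rw [← h]; exact (hm τ ρ).2 ⟨hρ, hτ⟩
      exact ((hm σ ρ).1 this).2 hσ
  · intro h
    ext ρ
    rw [hm, hm]
    constructor
    · rintro ⟨hρ, hτ⟩; exact ⟨hρ, fun hσ => hτ ((h ρ hρ).2 hσ)⟩
    · rintro ⟨hρ, hσ⟩; exact ⟨hρ, fun hτ => hσ ((h ρ hρ).1 hτ)⟩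

lemma Dset_subset {V : Type} {Δ : Finset (Finset V)} (hΔ : IsComplex Δ) :
    Dset Δ ⊆ Δ := by
  intro ρ hρ
  rcases mem_Dset.1 hρ with h | ⟨F, hF, hsub, _, hne⟩
  · exact facets_subset h
  · exact hΔ.2 F (facets_subset hF) ρ hsub hne

lemma exists_facet {V : Type} {Δ : Finset (Finset V)} {ρ : Finset V}
    (hρ : ρ ∈ Δ) : ∃ F ∈ facets Δ, ρ ⊆ F := by
  obtain ⟨F, hF, hmax⟩ := (Δ.filter fun G => ρ ⊆ G).exists_maximal
    ⟨ρ, Finset.mem_filter.2 ⟨hρ, Finset.Subset.refl ρ⟩⟩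
  rw [Finset.mem_filter] at hF
  refine ⟨F, Finset.mem_filter.2 ⟨hF.1, fun G hG hFG => ?_⟩, hF.2⟩
  by_contra hne
  exact hne (Finset.Subset.antisymm hFG (hmax (Finset.mem_filter.2 ⟨hG, hF.2.trans hFG⟩)
    hFG))

/-- One-sided transfer: if the `Dset`-stars of `τ` and `σ` agree, then on any face
of `Δ` containing `τ` we also have `σ`. -/
lemma star_transfer {V : Type} {Δ : Finset (Finset V)} (hΔ : IsComplex Δ)
    {τ σ : Finset V} (hD : ∀ ρ ∈ Dset Δ, (τ ⊆ ρ ↔ σ ⊆ ρ)) :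
    ∀ ρ ∈ Δ, τ ⊆ ρ → σ ⊆ ρ := by
  intro ρ hρ hτρ
  obtain ⟨F, hF, hρF⟩ := exists_facet hρ
  have hFD : F ∈ Dset Δ := mem_Dset.2 (Or.inl hF)
  have hσF : σ ⊆ F := (hD F hFD).1 (hτρ.trans hρF)
  by_cases hcard : 2 ≤ F.card
  · -- all codim-1 faces of F are in Dset; deduce σ ⊆ τ
    have hστ : σ ⊆ τ := by
      intro w hw
      have hwF : w ∈ F := hσF hw
      have hD' : F.erase w ∈ Dset Δ := by
        refine mem_Dset.2 (Or.inr ⟨F, hF, Finset.erase_subset _ _,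
          Finset.card_erase_add_one hwF, ?_⟩)
        intro h
        have := Finset.card_erase_of_mem hwF
        rw [h] at this
        simp at this
        omega
      have hσe : ¬ σ ⊆ F.erase w := fun h =>
        Finset.notMem_erase w F (h hw)
      have hτe : ¬ τ ⊆ F.erase w := fun h => hσe ((hD _ hD').1 h)
      obtain ⟨u, huτ, hue⟩ := Finset.not_subset.1 hτe
      have huF : u ∈ F := hρF (hτρ huτ)
      have : u = w := by
        by_contra hne
        exact hue (Finset.mem_erase.2 ⟨hne, huF⟩)
      rwa [← this]
    exact hστ.trans hτρ
  · -- F is a singleton facet, so ρ = F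
    have hFne : F ≠ ∅ := by
      intro h; exact hΔ.1 (h ▸ facets_subset hF)
    have hF1 : F.card = 1 := by
      have : 0 < F.card := Finset.card_pos.2 (Finset.nonempty_iff_ne_empty.2 hFne)
      omega
    have hρne : ρ ≠ ∅ := by
      intro h; exact hΔ.1 (h ▸ hρ)
    have hρF' : ρ = F := by
      apply Finset.eq_of_subset_of_card_le hρF
      have : 0 < ρ.card := Finset.card_pos.2 (Finset.nonempty_iff_ne_empty.2 hρne)
      omega
    rw [hρF']
    exact hσF

/-- The two label conditions are equivalent. -/
lemma label_eq_iff {V : Type} {inst : DecidableEq (Finset V)}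
    {Δ : Finset (Finset V)} (hΔ : IsComplex Δ) (τ σ : Finset V) :
    @Finset.biUnion _ _ inst τ (mPV' Δ) = @Finset.biUnion _ _ inst σ (mPV' Δ) ↔
      @Finset.biUnion _ _ inst τ (mPV Δ) = @Finset.biUnion _ _ inst σ (mPV Δ) := by
  rw [biUnion_label_eq_iff (S := Dset Δ) (fun _ _ => mem_biUnion_mPV'),
    biUnion_label_eq_iff (S := Δ) (fun _ _ => mem_biUnion_mPV)]
  constructor
  · intro hD ρ hρ
    exact ⟨star_transfer hΔ hD ρ hρ, star_transfer hΔ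
      (fun ρ' hρ' => (hD ρ' hρ').symm) ρ hρ⟩
  · intro h ρ hρ
    exact h ρ (Dset_subset hΔ hρ)

/-- If `Δ` is a simplicial complex on `n` vertices (each lying on
a face) which is not the boundary of a simplex, then `Δ` is the Scarf complex of
`J'_Δ = (m'_1, …, m'_n)`: the nonempty faces of `Δ` are exactly the subsets of
`{1, …, n}` whose lcm of `m'`-labels differs from that of every other subset.
Assumed as known (Peeva–Velasco, hypothesis `hScarfJ`): `Δ` is the Scarf complex
of `J_Δ = (m_1, …, m_n)`. -/
theorem scarf_of_JPV' {n : ℕ} (Δ : Finset (Finset (Fin n)))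
    (hΔ : IsComplex Δ) (hvtx : ∀ v : Fin n, ({v} : Finset (Fin n)) ∈ Δ)
    (hnb : ¬ IsBoundaryOfFullSimplex Δ)
    (hScarfJ : ∀ σ : Finset (Fin n), σ.Nonempty →
      (σ ∈ Δ ↔ ∀ τ : Finset (Fin n), τ ≠ σ →
        τ.biUnion (mPV Δ) ≠ σ.biUnion (mPV Δ))) :
    ∀ σ : Finset (Fin n), σ.Nonempty →
      (σ ∈ Δ ↔ ∀ τ : Finset (Fin n), τ ≠ σ →
        τ.biUnion (mPV' Δ) ≠ σ.biUnion (mPV' Δ)) := by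
  intro σ hσ
  rw [hScarfJ σ hσ]
  constructor
  · intro h τ hτ he
    exact h τ hτ ((label_eq_iff hΔ τ σ).1 he)
  · intro h τ hτ he
    exact h τ hτ ((label_eq_iff hΔ τ σ).2 he)
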